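/- Lemma 1 (lower bound on the Lagrange multiplier): in the perturbed-problem setup, suppose (x⁰, y⁰, u⁰) is 0-feasible with cost equal to ψ(0), that x⁰ h' > 0 and y⁰ h' > 0, and that λ ∈ ℝ satisfies ψ(0) - λ*ε ≤ ψ(ε) for every ε ≥ 0 (the subgradient inequality furnished by a saddle point of the Lagrangian obtained by dualizing the h'-th constraint). Then λ ≥ (α h' * b h' + β h' * a h') / (a h' + b h'). -/

import Mathlib

open Finset

/-- A triple `(x, y, u)` is `ε`-feasible for the perturbed problem. -/
def PertFeasible (H m : ℕ) (h' : Fin H) (g : Fin H → (Fin m → ℝ) → ℝ)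
    (Cu : Set (Fin H → Fin m → ℝ)) (Cy : Set (Fin H → ℝ)) (ε : ℝ)
    (x y : Fin H → ℝ) (u : Fin H → Fin m → ℝ) : Prop :=
  u ∈ Cu ∧ y ∈ Cy ∧ (∀ h, h ≠ h' → g h (u h) ≤ x h + y h) ∧
    g h' (u h') ≤ x h' + y h' + ε ∧ (∀ h, 0 ≤ x h) ∧ (∀ h, 0 ≤ y h)

/-- The cost of a triple `(x, y, u)`. -/
def PertCost (H m : ℕ) (α β a b : Fin H → ℝ)
    (f : (Fin H → Fin m → ℝ) → ℝ) (K : ℝ → ℝ)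
    (x y : Fin H → ℝ) (u : Fin H → Fin m → ℝ) : ℝ :=
  (∑ h, (α h * x h + β h * y h)) + f u + K (∑ h, (a h * x h - b h * y h))

/-- The optimal value `ψ(ε)` of the perturbed problem. -/
noncomputable def psi (H m : ℕ) (h' : Fin H) (α β a b : Fin H → ℝ)
    (g : Fin H → (Fin m → ℝ) → ℝ) (Cu : Set (Fin H → Fin m → ℝ))
    (Cy : Set (Fin H → ℝ)) (f : (Fin H → Fin m → ℝ) → ℝ) (K : ℝ → ℝ)
    (ε : ℝ) : ℝ :=
  sInf {c : ℝ | ∃ x y : Fin H → ℝ, ∃ u : Fin H → Fin m → ℝ,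
    PertFeasible H m h' g Cu Cy ε x y u ∧ c = PertCost H m α β a b f K x y u}

/-- Lemma 1: lower bound on the Lagrange multiplier associated with the
perturbed constraint. -/
theorem multiplier_lower_bound
    (H m : ℕ) (hH : 1 ≤ H) (h' : Fin H)
    (α β a b : Fin H → ℝ)
    (hα : ∀ h, 0 < α h) (hβ : ∀ h, 0 < β h)
    (ha : ∀ h, 0 < a h) (hb : ∀ h, 0 < b h)
    (Cu : Set (Fin H → Fin m → ℝ)) (hCu : Convex ℝ Cu)
    (Cy : Set (Fin H → ℝ)) (hCy : Convex ℝ Cy)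
    (hCydown : ∀ y ∈ Cy, ∀ y' : Fin H → ℝ, (∀ h, y' h ≤ y h) → y' ∈ Cy)
    (f : (Fin H → Fin m → ℝ) → ℝ) (hf : ConvexOn ℝ Set.univ f)
    (g : Fin H → (Fin m → ℝ) → ℝ) (hg : ∀ h, ConvexOn ℝ Set.univ (g h))
    (K : ℝ → ℝ) (hK : ConvexOn ℝ Set.univ K)
    (hbdd : ∀ ε : ℝ, 0 ≤ ε → BddBelow
      {c : ℝ | ∃ x y : Fin H → ℝ, ∃ u : Fin H → Fin m → ℝ,
        PertFeasible H m h' g Cu Cy ε x y u ∧ c = PertCost H m α β a b f K x y u})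
    (x0 y0 : Fin H → ℝ) (u0 : Fin H → Fin m → ℝ)
    (hfeas0 : PertFeasible H m h' g Cu Cy 0 x0 y0 u0)
    (hopt : PertCost H m α β a b f K x0 y0 u0 = psi H m h' α β a b g Cu Cy f K 0)
    (hx0 : 0 < x0 h') (hy0 : 0 < y0 h')
    (lam : ℝ)
    (hsub : ∀ ε : ℝ, 0 ≤ ε →
      psi H m h' α β a b g Cu Cy f K 0 - lam * ε ≤
        psi H m h' α β a b g Cu Cy f K ε) :
    lam ≥ (α h' * b h' + β h' * a h') / (a h' + b h') := by

  obtain ⟨hu0, hy0C, hgh, hgh', hx0n, hy0n⟩ := hfeas0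
  set A := a h' with hA
  set B := b h' with hB
  have hs : 0 < A + B := add_pos (ha h') (hb h')
  set ε := min (x0 h') (y0 h') with hεdef
  have hε : 0 < ε := lt_min hx0 hy0
  set δx := ε * B / (A + B) with hδx
  set δy := ε * A / (A + B) with hδy
  have hδxpos : 0 < δx := div_pos (mul_pos hε (hb h')) hs
  have hδypos : 0 < δy := div_pos (mul_pos hε (ha h')) hs
  have hsum : δx + δy = ε := by rw [hδx, hδy, ← add_div, div_eq_iff hs.ne']; ring
  have hδxle : δx ≤ x0 h' := by
    have h1 : δx ≤ ε := by
      rw [hδx, div_le_iff₀ hs]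
      nlinarith [hε.le, (ha h').le]
    exact h1.trans (min_le_left _ _)
  have hδyle : δy ≤ y0 h' := by
    have h1 : δy ≤ ε := by
      rw [hδy, div_le_iff₀ hs]
      nlinarith [hε.le, (hb h').le]
    exact h1.trans (min_le_right _ _)
  set x1 := Function.update x0 h' (x0 h' - δx) with hx1
  set y1 := Function.update y0 h' (y0 h' - δy) with hy1
  have hx1h : ∀ h, x1 h = x0 h - (if h = h' then δx else 0) := by
    intro h; by_cases hh : h = h' <;> simp [hx1, Function.update, hh]
  have hy1h : ∀ h, y1 h = y0 h - (if h = h' then δy else 0) := by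
    intro h; by_cases hh : h = h' <;> simp [hy1, Function.update, hh]
  -- feasibility
  have hfeas1 : PertFeasible H m h' g Cu Cy ε x1 y1 u0 := by
    refine ⟨hu0, ?_, ?_, ?_, ?_, ?_⟩
    · exact hCydown y0 hy0C y1 (fun h => by rw [hy1h h]; split <;> simp [hδypos.le])
    · intro h hh
      rw [hx1h h, hy1h h]
      simp only [if_neg hh]
      simpa using hgh h hh
    · have hx1e : x1 h' = x0 h' - δx := by simp [hx1]
      have hy1e : y1 h' = y0 h' - δy := by simp [hy1]
      rw [hx1e, hy1e]
      linarith [hsum, hgh']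
    · intro h; rw [hx1h h]; split
      · next hh => subst hh; linarith
      · simpa using hx0n h
    · intro h; rw [hy1h h]; split
      · next hh => subst hh; linarith
      · simpa using hy0n h
  -- cost computation
  have hcost : PertCost H m α β a b f K x1 y1 u0 =
      PertCost H m α β a b f K x0 y0 u0 - (α h' * δx + β h' * δy) := by
    unfold PertCost
    have e1 : ∑ h, (α h * x1 h + β h * y1 h) =
        (∑ h, (α h * x0 h + β h * y0 h)) - (α h' * δx + β h' * δy) := by
      have : ∀ h, α h * x1 h + β h * y1 h =
          (α h * x0 h + β h * y0 h) - (if h = h' then α h' * δx + β h' * δy else 0) := by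
        intro h; rw [hx1h h, hy1h h]
        by_cases hh : h = h' <;> simp [hh] <;> ring
      rw [Finset.sum_congr rfl (fun h _ => this h), Finset.sum_sub_distrib,
        Finset.sum_ite_eq' Finset.univ h']
      simp
    have e2 : ∑ h, (a h * x1 h - b h * y1 h) = ∑ h, (a h * x0 h - b h * y0 h) := by
      apply Finset.sum_congr rfl
      intro h _
      rw [hx1h h, hy1h h]
      by_cases hh : h = h'
      · rw [hh, if_pos rfl, if_pos rfl]
        have hab : a h' * δx = b h' * δy := by
          show A * δx = B * δy
          rw [hδx, hδy]; field_simp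
        linear_combination -hab
      · simp [hh]
    rw [e1, e2]; ring
  have hψε : psi H m h' α β a b g Cu Cy f K ε ≤
      PertCost H m α β a b f K x0 y0 u0 - (α h' * δx + β h' * δy) := by
    rw [← hcost]
    exact csInf_le (hbdd ε hε.le) ⟨x1, y1, u0, hfeas1, rfl⟩
  have hchain := (hsub ε hε.le).trans hψε
  rw [hopt] at hchain
  have hlam : (α h' * δx + β h' * δy) ≤ lam * ε := by linarith
  have hval : α h' * δx + β h' * δy = (α h' * B + β h' * A) / (A + B) * ε := by
    rw [hδx, hδy]; field_simp
  rw [hval] at hlam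
  have := le_of_mul_le_mul_right (by linarith : (α h' * B + β h' * A) / (A + B) * ε ≤ lam * ε) hε
  exact this
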